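/- Let γ > 0, C₁ > 0, θ ∈ (0,1], and let x, z, z⁺, w, x^*, ξ ∈ H satisfy: θ(z⁺ − z) + γ∇f(w) + γξ = 0; ξ is a μ-strong subgradient of h at z⁺, i.e. h(u) ≥ h(z⁺) + ⟨ξ, u − z⁺⟩ + (μ/2)‖u − z⁺‖² for every u ∈ H; y := (1 − θ)x + θz and x⁺ := θz⁺ + (1 − θ)x. Then F(x⁺) ≤ (1 − θ)F(x) + θF(x^*) − γ(1/2 − γL/2 − C₁/2) ‖(x⁺ − y)/γ‖² + ( γL²/(2C₁) + L ) ‖w − y‖² + (1/(2γ)) ‖θz − θx^*‖² − ( 1/(2γ) + μ/(2θ) ) ‖θz⁺ − θx^*‖². -/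

import Mathlib

open scoped RealInnerProductSpace

private lemma line_hasDerivAt {H : Type*} [NormedAddCommGroup H] [InnerProductSpace ℝ H]
    (f : H → ℝ) (f' : H → H)
    (hgrad : ∀ u, HasFDerivAt f ((innerSL ℝ (f' u)) : H →L[ℝ] ℝ) u)
    (a b : H) (t : ℝ) :
    HasDerivAt (fun s : ℝ => f (a + s • (b - a))) ⟪f' (a + t • (b - a)), b - a⟫ t := by
  have hc : HasDerivAt (fun s : ℝ => a + s • (b - a)) (b - a) t := by
    simpa using ((hasDerivAt_id t).smul_const (b - a)).const_add a
  exact (hgrad (a + t • (b - a))).comp_hasDerivAt t hc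

private lemma grad_ineq {H : Type*} [NormedAddCommGroup H] [InnerProductSpace ℝ H]
    (f : H → ℝ) (f' : H → H)
    (hf_conv : ConvexOn ℝ Set.univ f)
    (hgrad : ∀ u, HasFDerivAt f ((innerSL ℝ (f' u)) : H →L[ℝ] ℝ) u)
    (a b : H) : f a + ⟪f' a, b - a⟫ ≤ f b := by
  have hconv : ConvexOn ℝ Set.univ (fun s : ℝ => f (a + s • (b - a))) := by
    have h0 := hf_conv.comp_affineMap (AffineMap.lineMap a b)
    have : (fun s : ℝ => f (a + s • (b - a))) = f ∘ (AffineMap.lineMap a b) := by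
      funext s
      simp [AffineMap.lineMap_apply, add_comm]
    rw [this]
    simpa using h0
  have hd : HasDerivAt (fun s : ℝ => f (a + s • (b - a))) ⟪f' a, b - a⟫ 0 := by
    have := line_hasDerivAt f f' hgrad a b 0
    simpa using this
  have hslope := hconv.le_slope_of_hasDerivAt (Set.mem_univ (0:ℝ)) (Set.mem_univ (1:ℝ))
    one_pos hd
  simp [slope_def_field] at hslope
  linarith

private lemma descent {H : Type*} [NormedAddCommGroup H] [InnerProductSpace ℝ H]
    (f : H → ℝ) (f' : H → H) (L : ℝ) (hL : 0 < L)
    (hgrad : ∀ u, HasFDerivAt f ((innerSL ℝ (f' u)) : H →L[ℝ] ℝ) u)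
    (hlip : ∀ u v, ‖f' u - f' v‖ ≤ L * ‖u - v‖)
    (a b : H) : f b ≤ f a + ⟪f' a, b - a⟫ + L / 2 * ‖b - a‖ ^ 2 := by
  have hf'c : Continuous f' := by
    have : LipschitzWith (Real.toNNReal L) f' := by
      apply LipschitzWith.of_dist_le_mul
      intro u v
      rw [dist_eq_norm, dist_eq_norm, Real.coe_toNNReal L hL.le]
      exact hlip u v
    exact this.continuous
  have hG : Continuous fun t : ℝ => ⟪f' (a + t • (b - a)), b - a⟫ := by
    apply Continuous.inner
    · exact hf'c.comp (by continuity)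
    · exact continuous_const
  have hint : ∫ t in (0:ℝ)..1, ⟪f' (a + t • (b - a)), b - a⟫ = f b - f a := by
    have := intervalIntegral.integral_eq_sub_of_hasDerivAt
      (f := fun s : ℝ => f (a + s • (b - a)))
      (f' := fun t => ⟪f' (a + t • (b - a)), b - a⟫)
      (fun t _ => line_hasDerivAt f f' hgrad a b t)
      (hG.intervalIntegrable 0 1)
    simpa using this
  have hmono : ∫ t in (0:ℝ)..1, ⟪f' (a + t • (b - a)), b - a⟫
      ≤ ∫ t in (0:ℝ)..1, (⟪f' a, b - a⟫ + L * ‖b - a‖ ^ 2 * t) := by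
    apply intervalIntegral.integral_mono_on zero_le_one (hG.intervalIntegrable 0 1)
      ((by fun_prop : Continuous fun t : ℝ => ⟪f' a, b - a⟫ + L * ‖b - a‖ ^ 2 * t).intervalIntegrable 0 1)
    intro t ht
    have h1 : ⟪f' (a + t • (b - a)) - f' a, b - a⟫ ≤ L * ‖b - a‖ ^ 2 * t := by
      calc ⟪f' (a + t • (b - a)) - f' a, b - a⟫
          ≤ ‖f' (a + t • (b - a)) - f' a‖ * ‖b - a‖ := real_inner_le_norm _ _
        _ ≤ (L * ‖(a + t • (b - a)) - a‖) * ‖b - a‖ :=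
            mul_le_mul_of_nonneg_right (hlip _ _) (norm_nonneg _)
        _ = L * ‖b - a‖ ^ 2 * t := by
            simp only [add_sub_cancel_left, norm_smul, Real.norm_eq_abs,
              abs_of_nonneg ht.1]
            ring
    have h2 : ⟪f' (a + t • (b - a)), b - a⟫
        = ⟪f' a, b - a⟫ + ⟪f' (a + t • (b - a)) - f' a, b - a⟫ := by
      rw [inner_sub_left]; ring
    linarith
  have hval : ∫ t in (0:ℝ)..1, (⟪f' a, b - a⟫ + L * ‖b - a‖ ^ 2 * t)
      = ⟪f' a, b - a⟫ + L * ‖b - a‖ ^ 2 / 2 := by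
    rw [intervalIntegral.integral_add (intervalIntegrable_const)
      ((by fun_prop : Continuous fun t : ℝ => L * ‖b - a‖ ^ 2 * t).intervalIntegrable 0 1),
      intervalIntegral.integral_const_mul, integral_id]
    simp
    ring
  rw [hint, hval] at hmono
  linarith

/-- One-step contraction inequality for the momentum-compensated proximal step: with
`θ(z⁺ − z) + γ∇f(w) + γξ = 0`, `ξ` a `μ`-strong subgradient of `h` at `z⁺`,
`y = (1−θ)x + θz` and `x⁺ = θz⁺ + (1−θ)x`, one has
`F(x⁺) ≤ (1−θ)F(x) + θF(x^*) − γ(1/2 − γL/2 − C₁/2)‖(x⁺−y)/γ‖²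
  + (γL²/(2C₁) + L)‖w − y‖² + (1/(2γ))‖θz−θx^*‖² − (1/(2γ) + μ/(2θ))‖θz⁺−θx^*‖²`. -/
theorem aagd_one_step_contraction
    {H : Type*} [NormedAddCommGroup H] [InnerProductSpace ℝ H]
    (f h : H → ℝ) (f' : H → H) (L : ℝ) (hL : 0 < L)
    (hf_conv : ConvexOn ℝ Set.univ f)
    (hgrad : ∀ u, HasFDerivAt f ((innerSL ℝ (f' u)) : H →L[ℝ] ℝ) u)
    (hlip : ∀ u v, ‖f' u - f' v‖ ≤ L * ‖u - v‖)
    (hh_conv : ConvexOn ℝ Set.univ h)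
    (μ : ℝ) (hμ : 0 ≤ μ)
    (γ C₁ θ : ℝ) (hγ : 0 < γ) (hC₁ : 0 < C₁) (hθ0 : 0 < θ) (hθ1 : θ ≤ 1)
    (x z zp w xstar ξ : H)
    (hopt : θ • (zp - z) + γ • f' w + γ • ξ = 0)
    (hsubgrad : ∀ u : H, h u ≥ h zp + ⟪ξ, u - zp⟫ + μ / 2 * ‖u - zp‖ ^ 2) :
    f (θ • zp + (1 - θ) • x) + h (θ • zp + (1 - θ) • x)
      ≤ (1 - θ) * (f x + h x) + θ * (f xstar + h xstar)
        - γ * (1 / 2 - γ * L / 2 - C₁ / 2)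
            * ‖(1 / γ) • ((θ • zp + (1 - θ) • x) - ((1 - θ) • x + θ • z))‖ ^ 2
        + (γ * L ^ 2 / (2 * C₁) + L) * ‖w - ((1 - θ) • x + θ • z)‖ ^ 2
        + 1 / (2 * γ) * ‖θ • z - θ • xstar‖ ^ 2
        - (1 / (2 * γ) + μ / (2 * θ)) * ‖θ • zp - θ • xstar‖ ^ 2 := by
  set y : H := (1 - θ) • x + θ • z with hy
  set xp : H := θ • zp + (1 - θ) • x with hxp
  set g : H := f' w + ξ with hg
  have hγ' : γ ≠ 0 := hγ.ne'
  have hE2 : θ • (zp - z) = (-γ) • g := by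
    have h' : θ • (zp - z) + γ • g = 0 := by
      rw [hg, smul_add, ← add_assoc]; exact hopt
    rw [neg_smul]
    exact eq_neg_of_add_eq_zero_left h'
  have hE1 : xp - y = (-γ) • g := by
    rw [hxp, hy, ← hE2]; module
  have hEz : θ • (z - zp) = γ • g := by
    have : z - zp = -(zp - z) := by abel
    rw [this, smul_neg, hE2, neg_smul, neg_neg]
  have hnorm1 : ‖(1 / γ) • (xp - y)‖ ^ 2 = ‖g‖ ^ 2 := by
    rw [hE1, smul_smul]
    rw [show (1 / γ) * (-γ) = -1 by field_simp]
    simp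
  have hnormxy : ‖xp - y‖ ^ 2 = γ ^ 2 * ‖g‖ ^ 2 := by
    rw [hE1, norm_smul, Real.norm_eq_abs, abs_neg, abs_of_pos hγ, mul_pow]
  -- basic inequalities
  have h1 : f xp ≤ f y + ⟪f' y, xp - y⟫ + L / 2 * ‖xp - y‖ ^ 2 :=
    descent f f' L hL hgrad hlip y xp
  rw [hnormxy] at h1
  have h2 : f y ≤ f w + ⟪f' w, y - w⟫ + L / 2 * ‖y - w‖ ^ 2 :=
    descent f f' L hL hgrad hlip w y
  rw [norm_sub_rev y w] at h2
  have h3 : f w + ⟪f' w, x - w⟫ ≤ f x := grad_ineq f f' hf_conv hgrad w x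
  have h4 : f w + ⟪f' w, xstar - w⟫ ≤ f xstar := grad_ineq f f' hf_conv hgrad w xstar
  have h5 : h xp ≤ θ * h zp + (1 - θ) * h x := by
    have := hh_conv.2 (Set.mem_univ zp) (Set.mem_univ x) hθ0.le
      (by linarith : (0:ℝ) ≤ 1 - θ) (by ring)
    simpa [hxp] using this
  have h7 : ⟪f' y, xp - y⟫ = ⟪f' w, xp - y⟫ + ⟪f' y - f' w, xp - y⟫ := by
    rw [inner_sub_left]; ring
  have h8 : ⟪f' y - f' w, xp - y⟫
      ≤ γ * L ^ 2 / (2 * C₁) * ‖w - y‖ ^ 2 + C₁ * γ / 2 * ‖g‖ ^ 2 := by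
    have hxpn : ‖xp - y‖ = γ * ‖g‖ := by
      rw [hE1, norm_smul, Real.norm_eq_abs, abs_neg, abs_of_pos hγ]
    have ha : ⟪f' y - f' w, xp - y⟫ ≤ (L * ‖w - y‖) * (γ * ‖g‖) := by
      calc ⟪f' y - f' w, xp - y⟫ ≤ ‖f' y - f' w‖ * ‖xp - y‖ := real_inner_le_norm _ _
        _ ≤ (L * ‖y - w‖) * ‖xp - y‖ :=
            mul_le_mul_of_nonneg_right (hlip y w) (norm_nonneg _)
        _ = (L * ‖w - y‖) * (γ * ‖g‖) := by rw [norm_sub_rev, hxpn]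
    have hb : γ * L ^ 2 / (2 * C₁) * ‖w - y‖ ^ 2 + C₁ * γ / 2 * ‖g‖ ^ 2
        - (L * ‖w - y‖) * (γ * ‖g‖) = γ / (2 * C₁) * (L * ‖w - y‖ - C₁ * ‖g‖) ^ 2 := by
      field_simp; ring
    have hc : 0 ≤ γ / (2 * C₁) * (L * ‖w - y‖ - C₁ * ‖g‖) ^ 2 := by positivity
    linarith
  have h10 : ⟪f' w, y - w⟫ + ⟪f' w, xp - y⟫ = ⟪f' w, xp - w⟫ := by
    rw [← inner_add_right]
    congr 1
    abel
  have h11 : ⟪f' w, xp - w⟫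
      = (1 - θ) * ⟪f' w, x - w⟫ + θ * ⟪f' w, xstar - w⟫ + θ * ⟪f' w, zp - xstar⟫ := by
    have hvec : xp - w = (1 - θ) • (x - w) + (θ • (xstar - w) + θ • (zp - xstar)) := by
      rw [hxp]; module
    rw [hvec, inner_add_right, inner_add_right, real_inner_smul_right,
      real_inner_smul_right, real_inner_smul_right]
    ring
  have h12 : ⟪ξ, xstar - zp⟫ = -⟪ξ, zp - xstar⟫ := by
    rw [show xstar - zp = -(zp - xstar) by abel, inner_neg_right]
  have h13 : θ * (⟪f' w, zp - xstar⟫ + ⟪ξ, zp - xstar⟫)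
      = 1 / (2 * γ) * ‖θ • z - θ • xstar‖ ^ 2 - 1 / (2 * γ) * ‖θ • zp - θ • xstar‖ ^ 2
        - γ / 2 * ‖g‖ ^ 2 := by
    have huv := norm_add_sq_real (γ • g) (θ • (zp - xstar))
    have hsum : γ • g + θ • (zp - xstar) = θ • z - θ • xstar := by
      rw [← hEz]; module
    rw [hsum, show θ • (zp - xstar) = θ • zp - θ • xstar by module] at huv
    have hip : ⟪γ • g, θ • zp - θ • xstar⟫
        = γ * (θ * (⟪f' w, zp - xstar⟫ + ⟪ξ, zp - xstar⟫)) := by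
      rw [show θ • zp - θ • xstar = θ • (zp - xstar) by module,
        real_inner_smul_left, real_inner_smul_right, hg, inner_add_left]
    have hng : ‖γ • g‖ ^ 2 = γ ^ 2 * ‖g‖ ^ 2 := by
      rw [norm_smul, Real.norm_eq_abs, abs_of_pos hγ, mul_pow]
    rw [hip, hng] at huv
    field_simp
    linarith
  have h14 : ‖θ • zp - θ • xstar‖ ^ 2 = θ ^ 2 * ‖xstar - zp‖ ^ 2 := by
    rw [show θ • zp - θ • xstar = θ • (zp - xstar) by module, norm_smul,
      Real.norm_eq_abs, abs_of_pos hθ0, mul_pow, norm_sub_rev]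
  have hgoal_eq : (1 / (2 * γ) + μ / (2 * θ)) * ‖θ • zp - θ • xstar‖ ^ 2
      = 1 / (2 * γ) * ‖θ • zp - θ • xstar‖ ^ 2 + θ * (μ / 2 * ‖xstar - zp‖ ^ 2) := by
    rw [h14]; field_simp
  have hm3 : (1 - θ) * (f w + ⟪f' w, x - w⟫) ≤ (1 - θ) * f x :=
    mul_le_mul_of_nonneg_left h3 (by linarith)
  have hm4 : θ * (f w + ⟪f' w, xstar - w⟫) ≤ θ * f xstar :=
    mul_le_mul_of_nonneg_left h4 hθ0.le
  have hm6 : θ * (h zp + ⟪ξ, xstar - zp⟫ + μ / 2 * ‖xstar - zp‖ ^ 2) ≤ θ * h xstar :=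
    mul_le_mul_of_nonneg_left (hsubgrad xstar) hθ0.le
  rw [h12] at hm6
  have hsl : 0 ≤ L / 2 * ‖w - y‖ ^ 2 := by positivity
  rw [hnorm1, hgoal_eq]
  linarith [h1, h2, h5, h7, h8, h10, h11, h12, h13, hm3, hm4, hm6, hsl]
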